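/- Let L ≥ 3 be an integer, let ω : {0, …, L} → ℝ and r : {1, …, L} → ℝ be positive, let ψ(m) = (ω_{m−1}+ω_m)/(r_m ω_{m−1} ω_m), Φ̲(m) = Σ_{i=1}^m ψ(i), Φ̄(m) = Σ_{i=m+1}^L ψ(i), and S(a,b) = Φ̲(a)Φ̲(b) + Φ̄(a)Φ̄(b). Then for every 1 ≤ i ≤ L−2, with Σr := r_i + r_{i+1} + r_{i+2}: (r_i/Σr) · (ω_{i−1}/(ω_{i−1}+ω_i)) · (S(i−1, i+1) − S(i, i+1)) + (r_{i+1}/Σr) · ( ∫₀¹ [p²·S(i+1,i+1) + 2p(1−p)·S(i,i+1) + (1−p)²·S(i,i)] dBeta(ω_{i+1}/2, ω_i/2; p) − S(i, i+1) ) + (r_{i+2}/Σr) · (ω_{i+2}/(ω_{i+1}+ω_{i+2})) · (S(i, i+2) − S(i, i+1)) = − ψ(i+1)² · (2 r_{i+1}/Σr) · ω_i ω_{i+1} / ((ω_i+ω_{i+1})(ω_i+ω_{i+1}+2)). In particular this expected increment is strictly negative. (This is the drift of the functional S when the two dual particles occupy the adjacent interior sites i and i+1.) -/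
import Mathlib
set_option maxHeartbeats 4000000

open Real

/-- `ψ(m) = (ω_{m−1} + ω_m)/(r_m ω_{m−1} ω_m)`. -/
noncomputable def psi (ω r : ℕ → ℝ) (m : ℕ) : ℝ :=
  (ω (m - 1) + ω m) / (r m * ω (m - 1) * ω m)

/-- `Φ̲(m) = Σ_{i=1}^m ψ(i)`. -/
noncomputable def phiLow (ω r : ℕ → ℝ) (m : ℕ) : ℝ :=
  ∑ i ∈ Finset.Icc 1 m, psi ω r i

/-- `Φ̄(m) = Σ_{i=m+1}^L ψ(i)`. -/
noncomputable def phiHigh (L : ℕ) (ω r : ℕ → ℝ) (m : ℕ) : ℝ :=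
  ∑ i ∈ Finset.Icc (m + 1) L, psi ω r i

/-- `S(a,b) = Φ̲(a)Φ̲(b) + Φ̄(a)Φ̄(b)`. -/
noncomputable def Sfun (L : ℕ) (ω r : ℕ → ℝ) (a b : ℕ) : ℝ :=
  phiLow ω r a * phiLow ω r b + phiHigh L ω r a * phiHigh L ω r b

/-- Integration of `f` against the `Beta(α, β)` density on `(0,1)`. -/
noncomputable def betaInt (α β : ℝ) (f : ℝ → ℝ) : ℝ :=
  ∫ p in Set.Ioo (0 : ℝ) 1,
    (p ^ (α - 1) * (1 - p) ^ (β - 1) /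
      (Real.Gamma α * Real.Gamma β / Real.Gamma (α + β))) * f p

section BetaAux

open MeasureTheory Set

lemma betaOn_integrable {a b : ℝ} (ha : 0 < a) (hb : 0 < b) :
    IntegrableOn (fun x : ℝ => x ^ (a - 1) * (1 - x) ^ (b - 1)) (Ioo (0:ℝ) 1) := by
  have h := Complex.betaIntegral_convergent (u := (a:ℂ)) (v := (b:ℂ))
    (by simpa using ha) (by simpa using hb)
  rw [intervalIntegrable_iff_integrableOn_Ioc_of_le zero_le_one] at h
  have h2 : IntegrableOn (fun x : ℝ => ((x:ℂ) ^ ((a:ℂ) - 1) * (1 - (x:ℂ)) ^ ((b:ℂ) - 1)).re)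
      (Ioc (0:ℝ) 1) := h.re
  have h3 := h2.mono_set Ioo_subset_Ioc_self
  apply h3.congr_fun _ measurableSet_Ioo
  intro x hx
  have hx0 : (0:ℝ) ≤ x := hx.1.le
  have hx1 : (0:ℝ) ≤ 1 - x := by linarith [hx.2]
  show ((x:ℂ) ^ ((a:ℂ) - 1) * (1 - (x:ℂ)) ^ ((b:ℂ) - 1)).re = x ^ (a - 1) * (1 - x) ^ (b - 1)
  rw [show ((1:ℂ) - (x:ℝ)) = ((1 - x : ℝ) : ℂ) by push_cast; ring,
    show ((a:ℂ) - 1) = ((a - 1 : ℝ) : ℂ) by push_cast; ring,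
    show ((b:ℂ) - 1) = ((b - 1 : ℝ) : ℂ) by push_cast; ring,
    ← Complex.ofReal_cpow hx0, ← Complex.ofReal_cpow hx1, ← Complex.ofReal_mul,
    Complex.ofReal_re]

lemma betaOn_value {a b : ℝ} (ha : 0 < a) (hb : 0 < b) :
    ∫ x in Ioo (0:ℝ) 1, x ^ (a - 1) * (1 - x) ^ (b - 1)
      = Real.Gamma a * Real.Gamma b / Real.Gamma (a + b) := by
  have h := Complex.Gamma_mul_Gamma_eq_betaIntegral (s := (a:ℂ)) (t := (b:ℂ))
    (by simpa using ha) (by simpa using hb)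
  have hB : Complex.betaIntegral (a:ℂ) (b:ℂ)
      = ((∫ x in Ioo (0:ℝ) 1, x ^ (a - 1) * (1 - x) ^ (b - 1) : ℝ) : ℂ) := by
    rw [Complex.betaIntegral, intervalIntegral.integral_of_le zero_le_one,
      integral_Ioc_eq_integral_Ioo]
    have hcongr : ∀ x ∈ Ioo (0:ℝ) 1, (x:ℂ) ^ ((a:ℂ) - 1) * (1 - (x:ℂ)) ^ ((b:ℂ) - 1)
        = ((x ^ (a - 1) * (1 - x) ^ (b - 1) : ℝ) : ℂ) := by
      intro x hx
      have hx0 : (0:ℝ) ≤ x := hx.1.le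
      have hx1 : (0:ℝ) ≤ 1 - x := by linarith [hx.2]
      rw [show ((1:ℂ) - (x:ℝ)) = ((1 - x : ℝ) : ℂ) by push_cast; ring,
        show ((a:ℂ) - 1) = ((a - 1 : ℝ) : ℂ) by push_cast; ring,
        show ((b:ℂ) - 1) = ((b - 1 : ℝ) : ℂ) by push_cast; ring,
        ← Complex.ofReal_cpow hx0, ← Complex.ofReal_cpow hx1, ← Complex.ofReal_mul]
    rw [setIntegral_congr_fun measurableSet_Ioo hcongr]
    exact integral_ofReal
  rw [hB] at h
  rw [show ((a:ℂ) + (b:ℂ)) = ((a + b : ℝ) : ℂ) by push_cast; ring] at h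
  simp only [Complex.Gamma_ofReal, ← Complex.ofReal_mul] at h
  have := Complex.ofReal_inj.mp h
  have hg : Real.Gamma (a + b) ≠ 0 := (Real.Gamma_pos_of_pos (by linarith)).ne'
  field_simp
  linarith [this]

lemma betaInt_poly (a b c1 c2 c3 : ℝ) (ha : 0 < a) (hb : 0 < b) :
    betaInt a b (fun p => p ^ 2 * c1 + 2 * (p * (1 - p)) * c2 + (1 - p) ^ 2 * c3) =
      ((a + 1) * a * c1 + 2 * (a * b) * c2 + (b + 1) * b * c3) / ((a + b) * (a + b + 1)) := by
  have hGa : 0 < Real.Gamma a := Real.Gamma_pos_of_pos ha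
  have hGb : 0 < Real.Gamma b := Real.Gamma_pos_of_pos hb
  have hGab : 0 < Real.Gamma (a + b) := Real.Gamma_pos_of_pos (by linarith)
  set B : ℝ := Real.Gamma a * Real.Gamma b / Real.Gamma (a + b) with hB
  have hBpos : 0 < B := by positivity
  have key : ∀ p ∈ Set.Ioo (0:ℝ) 1,
      (p ^ (a - 1) * (1 - p) ^ (b - 1) / B) *
        (p ^ 2 * c1 + 2 * (p * (1 - p)) * c2 + (1 - p) ^ 2 * c3)
      = (c1 / B) * (p ^ (a + 2 - 1) * (1 - p) ^ (b - 1))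
        + ((2 * c2 / B) * (p ^ (a + 1 - 1) * (1 - p) ^ (b + 1 - 1))
        + (c3 / B) * (p ^ (a - 1) * (1 - p) ^ (b + 2 - 1))) := by
    intro p hp
    have hp0 : 0 < p := hp.1
    have hp1 : 0 < 1 - p := by linarith [hp.2]
    have e1 : p ^ (a + 2 - 1) = p ^ (a - 1) * p ^ 2 := by
      rw [show p ^ (2:ℕ) = p ^ ((2:ℕ):ℝ) from (Real.rpow_natCast p 2).symm,
        ← Real.rpow_add hp0]
      congr 1; ring
    have e2 : p ^ (a + 1 - 1) = p ^ (a - 1) * p ^ (1:ℕ) := by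
      rw [show p ^ (1:ℕ) = p ^ ((1:ℕ):ℝ) from (Real.rpow_natCast p 1).symm,
        ← Real.rpow_add hp0]
      congr 1; ring
    have e3 : (1 - p) ^ (b + 1 - 1) = (1 - p) ^ (b - 1) * (1 - p) ^ (1:ℕ) := by
      rw [show (1-p) ^ (1:ℕ) = (1-p) ^ ((1:ℕ):ℝ) from (Real.rpow_natCast _ 1).symm,
        ← Real.rpow_add hp1]
      congr 1; ring
    have e4 : (1 - p) ^ (b + 2 - 1) = (1 - p) ^ (b - 1) * (1 - p) ^ 2 := by
      rw [show (1-p) ^ (2:ℕ) = (1-p) ^ ((2:ℕ):ℝ) from (Real.rpow_natCast _ 2).symm,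
        ← Real.rpow_add hp1]
      congr 1; ring
    rw [e1, e2, e3, e4]
    field_simp
    ring
  have i1 := (betaOn_integrable (by linarith : (0:ℝ) < a + 2) hb).const_mul (c1 / B)
  have i2 := (betaOn_integrable (by linarith : (0:ℝ) < a + 1)
      (by linarith : (0:ℝ) < b + 1)).const_mul (2 * c2 / B)
  have i3 := (betaOn_integrable ha (by linarith : (0:ℝ) < b + 2)).const_mul (c3 / B)
  have i23 : Integrable (fun x : ℝ => (2 * c2 / B) * (x ^ (a + 1 - 1) * (1 - x) ^ (b + 1 - 1))
      + (c3 / B) * (x ^ (a - 1) * (1 - x) ^ (b + 2 - 1))) (volume.restrict (Ioo 0 1)) :=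
    i2.add i3
  rw [betaInt, setIntegral_congr_fun measurableSet_Ioo key, integral_add i1 i23,
    integral_add i2 i3, integral_const_mul, integral_const_mul, integral_const_mul,
    betaOn_value (by linarith) hb, betaOn_value (by linarith) (by linarith),
    betaOn_value ha (by linarith)]
  have g1 : Real.Gamma (a + 2) = (a + 1) * (a * Real.Gamma a) := by
    rw [show a + 2 = (a + 1) + 1 by ring, Real.Gamma_add_one (by linarith),
      Real.Gamma_add_one ha.ne']
  have g2 : Real.Gamma (a + 1) = a * Real.Gamma a := Real.Gamma_add_one ha.ne'
  have g3 : Real.Gamma (b + 1) = b * Real.Gamma b := Real.Gamma_add_one hb.ne'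
  have g4 : Real.Gamma (b + 2) = (b + 1) * (b * Real.Gamma b) := by
    rw [show b + 2 = (b + 1) + 1 by ring, Real.Gamma_add_one (by linarith),
      Real.Gamma_add_one hb.ne']
  have g5 : Real.Gamma (a + 2 + b) = (a + b + 1) * ((a + b) * Real.Gamma (a + b)) := by
    rw [show a + 2 + b = ((a + b) + 1) + 1 by ring, Real.Gamma_add_one (by linarith),
      Real.Gamma_add_one (by linarith)]
  have g6 : Real.Gamma (a + 1 + (b + 1)) = (a + b + 1) * ((a + b) * Real.Gamma (a + b)) := by
    rw [show a + 1 + (b + 1) = ((a + b) + 1) + 1 by ring, Real.Gamma_add_one (by linarith),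
      Real.Gamma_add_one (by linarith)]
  have g7 : Real.Gamma (a + (b + 2)) = (a + b + 1) * ((a + b) * Real.Gamma (a + b)) := by
    rw [show a + (b + 2) = ((a + b) + 1) + 1 by ring, Real.Gamma_add_one (by linarith),
      Real.Gamma_add_one (by linarith)]
  rw [g1, g2, g3, g4, g5, g6, g7, hB]
  have h1 : a + b ≠ 0 := by positivity
  have h2 : a + b + 1 ≠ 0 := by positivity
  field_simp
  ring

end BetaAux

lemma phiLow_succ (ω r : ℕ → ℝ) (m : ℕ) :
    phiLow ω r (m + 1) = phiLow ω r m + psi ω r (m + 1) := by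
  unfold phiLow
  rw [Finset.sum_Icc_succ_top (by omega)]

lemma phiHigh_succ (L : ℕ) (ω r : ℕ → ℝ) (m : ℕ) (h : m + 1 ≤ L) :
    phiHigh L ω r m = psi ω r (m + 1) + phiHigh L ω r (m + 1) := by
  unfold phiHigh
  rw [show Finset.Icc (m + 1) L = insert (m + 1) (Finset.Icc (m + 2) L) by
    ext x; simp only [Finset.mem_Icc, Finset.mem_insert]; omega]
  rw [Finset.sum_insert (by simp)]

/-- The drift of the two-particle functional `S` when the dual particles occupy adjacent
interior sites `i` and `i+1`: the expected increment equals the stated explicit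
expression, and in particular it is strictly negative. -/
theorem drift_adjacent_sites (L : ℕ) (hL : 3 ≤ L) (ω r : ℕ → ℝ)
    (hω : ∀ m, m ≤ L → 0 < ω m) (hr : ∀ m, 1 ≤ m → m ≤ L → 0 < r m)
    (i : ℕ) (hi1 : 1 ≤ i) (hi2 : i ≤ L - 2) :
    (r i / (r i + r (i + 1) + r (i + 2))) * (ω (i - 1) / (ω (i - 1) + ω i)) *
          (Sfun L ω r (i - 1) (i + 1) - Sfun L ω r i (i + 1))
        + (r (i + 1) / (r i + r (i + 1) + r (i + 2))) *
          (betaInt (ω (i + 1) / 2) (ω i / 2) (fun p =>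
              p ^ 2 * Sfun L ω r (i + 1) (i + 1) +
                2 * (p * (1 - p)) * Sfun L ω r i (i + 1) +
                (1 - p) ^ 2 * Sfun L ω r i i)
            - Sfun L ω r i (i + 1))
        + (r (i + 2) / (r i + r (i + 1) + r (i + 2))) *
          (ω (i + 2) / (ω (i + 1) + ω (i + 2))) *
          (Sfun L ω r i (i + 2) - Sfun L ω r i (i + 1))
      = -((psi ω r (i + 1)) ^ 2 * (2 * r (i + 1) / (r i + r (i + 1) + r (i + 2))) *
            (ω i * ω (i + 1) / ((ω i + ω (i + 1)) * (ω i + ω (i + 1) + 2))))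
      ∧ -((psi ω r (i + 1)) ^ 2 * (2 * r (i + 1) / (r i + r (i + 1) + r (i + 2))) *
            (ω i * ω (i + 1) / ((ω i + ω (i + 1)) * (ω i + ω (i + 1) + 2)))) < 0 := by
  have hiL : i + 2 ≤ L := by omega
  have hw0 : 0 < ω (i - 1) := hω _ (by omega)
  have hw1 : 0 < ω i := hω _ (by omega)
  have hw2 : 0 < ω (i + 1) := hω _ (by omega)
  have hw3 : 0 < ω (i + 2) := hω _ (by omega)
  have hr1 : 0 < r i := hr _ (by omega) (by omega)
  have hr2 : 0 < r (i + 1) := hr _ (by omega) (by omega)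
  have hr3 : 0 < r (i + 2) := hr _ (by omega) (by omega)
  have hpsi2 : 0 < psi ω r (i + 1) := by
    simp only [psi, Nat.add_sub_cancel]
    have : 0 < r (i + 1) * ω i * ω (i + 1) := by positivity
    exact div_pos (by positivity) this
  constructor
  · -- the identity
    have hl1 : phiLow ω r i = phiLow ω r (i - 1) + psi ω r i := by
      have h := phiLow_succ ω r (i - 1)
      rwa [show i - 1 + 1 = i by omega] at h
    have hl2 : phiLow ω r (i + 1) = phiLow ω r i + psi ω r (i + 1) := phiLow_succ ω r i
    have hl3 : phiLow ω r (i + 2) = phiLow ω r (i + 1) + psi ω r (i + 2) :=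
      phiLow_succ ω r (i + 1)
    have hh1 : phiHigh L ω r (i - 1) = psi ω r i + phiHigh L ω r i := by
      have h := phiHigh_succ L ω r (i - 1) (by omega)
      rwa [show i - 1 + 1 = i by omega] at h
    have hh2 : phiHigh L ω r i = psi ω r (i + 1) + phiHigh L ω r (i + 1) :=
      phiHigh_succ L ω r i (by omega)
    have hh3 : phiHigh L ω r (i + 1) = psi ω r (i + 2) + phiHigh L ω r (i + 2) :=
      phiHigh_succ L ω r (i + 1) (by omega)
    simp only [Sfun, hl3, hl2, hl1, hh1, hh2, hh3]
    rw [betaInt_poly _ _ _ _ _ (by positivity) (by positivity)]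
    simp only [psi, Nat.add_sub_cancel, show i + 2 - 1 = i + 1 from rfl]
    set A := phiLow ω r (i - 1)
    set C := phiHigh L ω r (i + 2)
    set w0 := ω (i - 1)
    set w1 := ω i
    set w2 := ω (i + 1)
    set w3 := ω (i + 2)
    set s1 := r i
    set s2 := r (i + 1)
    set s3 := r (i + 2)
    have n1 : w0 ≠ 0 := hw0.ne'
    have n2 : w1 ≠ 0 := hw1.ne'
    have n3 : w2 ≠ 0 := hw2.ne'
    have n4 : w3 ≠ 0 := hw3.ne'
    have n5 : s1 ≠ 0 := hr1.ne'
    have n6 : s2 ≠ 0 := hr2.ne'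
    have n7 : s3 ≠ 0 := hr3.ne'
    have n8 : w0 + w1 ≠ 0 := by positivity
    have n9 : w2 + w3 ≠ 0 := by positivity
    have n10 : s1 + s2 + s3 ≠ 0 := by positivity
    have n11 : w2 / 2 + w1 / 2 ≠ 0 := by positivity
    have n12 : w2 / 2 + w1 / 2 + 1 ≠ 0 := by positivity
    have n13 : w1 + w2 ≠ 0 := by positivity
    have n14 : w1 + w2 + 2 ≠ 0 := by positivity
    field_simp
    ring
  · -- negativity
    rw [neg_lt_zero]
    have h1 : 0 < 2 * r (i + 1) / (r i + r (i + 1) + r (i + 2)) := by positivity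
    have h2 : 0 < ω i * ω (i + 1) / ((ω i + ω (i + 1)) * (ω i + ω (i + 1) + 2)) := by positivity
    positivity
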